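/- arXiv:2512.05004 — 2 statements merged into one kernel-verified Lean document; each statement's English description precedes it below -/
import Mathlib

section
/- For every natural number n, the number of involutions in the symmetric group S_n (elements s with s² = 1, including the identity) equals ∑_{0 ≤ 2k ≤ n} n! / (2^k · k! · (n-2k)!). -/
open Nat

section Aux
open Finset Equiv Equiv.Perm

def c (n k : ℕ) : ℕ := n.choose (2*k) * (2*k-1)‼

lemma fact_two_mul (k : ℕ) : (2*k)! = 2^k * k ! * (2*k-1)‼ := by
  cases k with
  | zero => simp
  | succ k =>
    have h1 : (2*(k+1)) = (2*k+1) + 1 := by ring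
    rw [h1, Nat.factorial_eq_mul_doubleFactorial]
    have h2 : (2*k+1+1) = 2*(k+1) := by ring
    rw [h2, Nat.doubleFactorial_two_mul]
    have h3 : 2*(k+1)-1 = 2*k+1 := by omega
    rw [h3]

lemma term_eq (n k : ℕ) (h : 2*k ≤ n) :
    n ! / (2 ^ k * k ! * (n - 2 * k)!) = c n k := by
  have h1 := Nat.choose_mul_factorial_mul_factorial h
  have h2 : n ! = c n k * (2 ^ k * k ! * (n - 2*k)!) := by
    rw [← h1, fact_two_mul]; unfold c; ring
  rw [h2, Nat.mul_div_cancel]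
  positivity

lemma c_zero (n : ℕ) : c n 0 = 1 := by simp [c]

lemma c_rec (n k : ℕ) : c (n+2) (k+1) = c (n+1) (k+1) + (n+1) * c n k := by
  unfold c
  have h1 : 2*(k+1) = (2*k+1)+1 := by ring
  rw [h1, Nat.choose_succ_succ (n+1) (2*k+1), Nat.add_mul]
  have h2 : 2*k+1+1-1 = (2*k)+1 := by omega
  rw [h2, Nat.doubleFactorial_add_one]
  have h3 : (n+1).choose (2*k+1) * ((2*k+1) * (2*k-1)‼) =
      ((n+1).choose (2*k+1) * (2*k+1)) * (2*k-1)‼ := by ring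
  have h4 : (n+1).choose (2*k+1) * (2*k+1) = (n+1) * n.choose (2*k) := by
    rw [← Nat.add_one_mul_choose_eq]
  rw [h3, h4]
  ring

def S (n : ℕ) : ℕ := ∑ k ∈ range (n/2 + 1), c n k

lemma sum_c (n K : ℕ) (h : n/2 + 1 ≤ K) : ∑ k ∈ range K, c n k = S n := by
  rw [S, eq_comm]
  apply Finset.sum_subset (by simp [Finset.range_subset, h]; intro x hx; omega)
  intro k _ hk
  simp only [Finset.mem_range, not_lt] at hk
  exact mul_eq_zero_of_left (Nat.choose_eq_zero_of_lt (by omega)) _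

lemma S_rec (n : ℕ) : S (n+2) = S (n+1) + (n+1) * S n := by
  have h2 : (n+2)/2 = n/2 + 1 := by omega
  rw [S, h2, Finset.sum_range_succ']
  simp only [c_rec, c_zero]
  rw [Finset.sum_add_distrib, ← Finset.mul_sum]
  have h : ∑ k ∈ range (n/2+1), c (n+1) (k+1) + 1 = ∑ k ∈ range (n/2+2), c (n+1) k := by
    rw [Finset.sum_range_succ' (c (n+1)) (n/2+1), c_zero]
  have hS : ∑ k ∈ range (n/2+2), c (n+1) k = S (n+1) := sum_c _ _ (by omega)
  have hSn : ∑ k ∈ range (n/2+1), c n k = S n := rfl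
  rw [hSn, ← hS, ← h]; ring

noncomputable def I (n : ℕ) : ℕ := Nat.card {s : Equiv.Perm (Fin n) // s ^ 2 = 1}

lemma sq_one_iff {α : Type*} {σ : Equiv.Perm α} : σ ^ 2 = 1 ↔ ∀ x, σ (σ x) = x := by
  rw [sq]
  constructor
  · intro h x
    have := Equiv.ext_iff.mp h x
    simpa using this
  · intro h
    ext x
    simpa using h x

lemma decompose_sq (n : ℕ) (p : Fin (n + 1)) (e : Perm (Fin n)) :
    (Equiv.Perm.decomposeFin.symm (p, e)) ^ 2 = 1 ↔
      e ^ 2 = 1 ∧ ∀ q : Fin n, p = q.succ → e q = q := by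
  rw [sq_one_iff, sq_one_iff]
  induction p using Fin.cases with
  | zero =>
    have hs : ∀ x : Fin n, Equiv.Perm.decomposeFin.symm ((0 : Fin (n+1)), e) x.succ
        = (e x).succ := by
      intro x
      rw [Equiv.Perm.decomposeFin_symm_apply_succ, Equiv.swap_self]
      rfl
    constructor
    · intro h
      refine ⟨fun x => ?_, fun q hq => absurd hq.symm (Fin.succ_ne_zero q)⟩
      have := h x.succ
      rw [hs, hs] at this
      exact Fin.succ_injective _ this
    · rintro ⟨h, -⟩ x
      induction x using Fin.cases with
      | zero => rw [Equiv.Perm.decomposeFin_symm_apply_zero,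
          Equiv.Perm.decomposeFin_symm_apply_zero]
      | succ y => rw [hs, hs, h]
  | succ q =>
    set σ := Equiv.Perm.decomposeFin.symm (q.succ, e) with hσdef
    have h0 : σ 0 = q.succ := Equiv.Perm.decomposeFin_symm_apply_zero q.succ e
    have hs : ∀ x : Fin n, σ x.succ = Equiv.swap 0 q.succ (e x).succ :=
      fun x => Equiv.Perm.decomposeFin_symm_apply_succ e q.succ x
    have hqs : σ q.succ = Equiv.swap 0 q.succ (e q).succ := hs q
    constructor
    · intro h
      have hq : e q = q := by
        have h1 := h 0
        rw [h0, hqs] at h1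
        have := congrArg (Equiv.swap 0 q.succ) h1
        rw [Equiv.swap_apply_self, Equiv.swap_apply_left] at this
        exact Fin.succ_injective _ this
      refine ⟨fun x => ?_, fun q' hq' => by
        have : q' = q := Fin.succ_injective _ hq'.symm
        rw [this]; exact hq⟩
      by_cases hx : x = q
      · rw [hx, hq, hq]
      · have hex : e x ≠ q := fun hc => hx (e.injective (by rw [hc, hq]))
        have h1 := h x.succ
        rw [hs, Equiv.swap_apply_of_ne_of_ne (Fin.succ_ne_zero _)
          (fun hc => hex (Fin.succ_injective _ hc)), hs] at h1
        have := congrArg (Equiv.swap 0 q.succ) h1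
        rw [Equiv.swap_apply_self, Equiv.swap_apply_of_ne_of_ne (Fin.succ_ne_zero _)
          (fun hc => hx (Fin.succ_injective _ hc))] at this
        exact Fin.succ_injective _ this
    · rintro ⟨h, hfix⟩ x
      have hq : e q = q := hfix q rfl
      have hσq : σ q.succ = 0 := by rw [hqs, hq, Equiv.swap_apply_right]
      induction x using Fin.cases with
      | zero => rw [h0, hσq]
      | succ y =>
        by_cases hy : y = q
        · rw [hy, hσq, h0]
        · have hey : e y ≠ q := fun hc => hy (e.injective (by rw [hc, hq]))
          rw [hs, Equiv.swap_apply_of_ne_of_ne (Fin.succ_ne_zero _)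
            (fun hc => hey (Fin.succ_injective _ hc)), hs, h,
            Equiv.swap_apply_of_ne_of_ne (Fin.succ_ne_zero _)
            (fun hc => hy (Fin.succ_injective _ hc))]

def fixZeroEquiv (n : ℕ) :
    {e : Perm (Fin (n + 1)) // e ^ 2 = 1 ∧ e 0 = 0} ≃ {e : Perm (Fin n) // e ^ 2 = 1} :=
  (Equiv.subtypeEquiv (Equiv.Perm.decomposeFin (n := n))
      (q := fun pe => (Equiv.Perm.decomposeFin.symm pe) ^ 2 = 1 ∧
        Equiv.Perm.decomposeFin.symm pe 0 = 0)
      (fun s => by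
        conv_lhs => rw [← Equiv.Perm.decomposeFin.symm_apply_apply s])).trans
    { toFun := fun pe => ⟨pe.1.2, by
        obtain ⟨⟨p, e⟩, hpe⟩ := pe
        have h0 : p = 0 := by
          have := hpe.2
          rwa [Equiv.Perm.decomposeFin_symm_apply_zero] at this
        subst h0
        exact ((decompose_sq n 0 e).mp hpe.1).1⟩
      invFun := fun e => ⟨(0, e.1), by
        constructor
        · exact (decompose_sq n 0 e.1).mpr ⟨e.2, fun q hq => absurd hq.symm (Fin.succ_ne_zero q)⟩
        · exact Equiv.Perm.decomposeFin_symm_apply_zero 0 e.1⟩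
      left_inv := fun pe => by
        obtain ⟨⟨p, e⟩, hpe⟩ := pe
        have h0 : p = 0 := by
          have := hpe.2
          rwa [Equiv.Perm.decomposeFin_symm_apply_zero] at this
        subst h0
        rfl
      right_inv := fun e => rfl }

lemma conj_fix {n : ℕ} (a b : Fin n) (e : Perm (Fin n)) (h2 : e ^ 2 = 1) (hb : e b = b) :
    (Equiv.swap a b * e * Equiv.swap a b) ^ 2 = 1 ∧ (Equiv.swap a b * e * Equiv.swap a b) a = a := by
  rw [sq_one_iff] at h2
  constructor
  · rw [sq_one_iff]
    intro x
    simp [Equiv.Perm.mul_apply, Equiv.swap_apply_self, h2]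
  · simp [Equiv.Perm.mul_apply, Equiv.swap_apply_left, hb, Equiv.swap_apply_right]

def fixPointEquiv (n : ℕ) (q : Fin (n + 1)) :
    {e : Perm (Fin (n + 1)) // e ^ 2 = 1 ∧ e q = q} ≃
      {e : Perm (Fin (n + 1)) // e ^ 2 = 1 ∧ e 0 = 0} where
  toFun e := ⟨Equiv.swap 0 q * e.1 * Equiv.swap 0 q, conj_fix 0 q e.1 e.2.1 e.2.2⟩
  invFun e := ⟨Equiv.swap 0 q * e.1 * Equiv.swap 0 q, by
    rw [Equiv.swap_comm]
    exact conj_fix q 0 e.1 e.2.1 e.2.2⟩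
  left_inv e := by
    apply Subtype.ext
    ext x
    simp [Equiv.Perm.mul_apply, Equiv.swap_apply_self]
  right_inv e := by
    apply Subtype.ext
    ext x
    simp [Equiv.Perm.mul_apply, Equiv.swap_apply_self]

lemma J_eq (n : ℕ) (q : Fin (n + 1)) :
    Nat.card {e : Perm (Fin (n + 1)) // e ^ 2 = 1 ∧ e q = q} = I n :=
  Nat.card_congr ((fixPointEquiv n q).trans (fixZeroEquiv n))

lemma I_rec (n : ℕ) : I (n + 2) = I (n + 1) + (n + 1) * I n := by
  have e1 : {s : Perm (Fin (n + 2)) // s ^ 2 = 1} ≃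
      Σ p : Fin (n + 2), {e : Perm (Fin (n + 1)) // e ^ 2 = 1 ∧ ∀ q, p = q.succ → e q = q} :=
    (Equiv.subtypeEquiv (Equiv.Perm.decomposeFin (n := n + 1))
        (q := fun pe => pe.2 ^ 2 = 1 ∧ ∀ q, pe.1 = q.succ → pe.2 q = q)
        (fun s => by
          conv_lhs => rw [← Equiv.Perm.decomposeFin.symm_apply_apply s]
          exact decompose_sq (n + 1) (Equiv.Perm.decomposeFin s).1
            (Equiv.Perm.decomposeFin s).2)).trans
      (Equiv.subtypeProdEquivSigmaSubtype
        (fun (p : Fin (n + 2)) (e : Perm (Fin (n + 1))) => e ^ 2 = 1 ∧ ∀ q, p = q.succ → e q = q))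
  rw [I, Nat.card_congr e1, Nat.card_eq_fintype_card, Fintype.card_sigma, Fin.sum_univ_succ]
  have hz : Fintype.card
      {e : Perm (Fin (n+1)) // e ^ 2 = 1 ∧ ∀ q, (0 : Fin (n+2)) = q.succ → e q = q}
      = I (n + 1) := by
    rw [I, Nat.card_eq_fintype_card]
    exact Fintype.card_congr (Equiv.subtypeEquivRight (fun e =>
      and_iff_left (fun q hq => absurd hq.symm (Fin.succ_ne_zero q))))
  have hsq : ∀ q : Fin (n + 1), Fintype.card
      {e : Perm (Fin (n+1)) // e ^ 2 = 1 ∧ ∀ q', (q.succ : Fin (n+2)) = q'.succ → e q' = q'}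
      = I n := by
    intro q
    rw [← J_eq n q, Nat.card_eq_fintype_card]
    apply Fintype.card_congr
    apply Equiv.subtypeEquivRight
    intro e
    constructor
    · rintro ⟨h2, hf⟩; exact ⟨h2, hf q rfl⟩
    · rintro ⟨h2, hf⟩
      refine ⟨h2, fun q' hq' => ?_⟩
      have : q' = q := (Fin.succ_injective _ hq'.symm)
      rw [this]; exact hf
  rw [hz]
  simp only [hsq]
  rw [Finset.sum_const, Finset.card_univ, Fintype.card_fin, smul_eq_mul]

lemma I_small (n : ℕ) [Subsingleton (Fin n)] : I n = 1 := by
  rw [I, Nat.card_eq_fintype_card, Fintype.card_eq_one_iff]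
  refine ⟨⟨1, by simp⟩, fun y => Subtype.ext (Equiv.ext fun x => Subsingleton.elim _ _)⟩


lemma I_eq_S : ∀ n, I n = S n := by
  have key : ∀ n, I n = S n ∧ I (n + 1) = S (n + 1) := by
    intro n
    induction n with
    | zero =>
      constructor
      · rw [I_small 0]; decide
      · rw [I_small 1]; decide
    | succ n ih =>
      exact ⟨ih.2, by rw [I_rec, S_rec, ih.1, ih.2]⟩
  exact fun n => (key n).1

end Aux

/-- The number of involutions in `S_n` (elements with `s² = 1`, including the identity)
equals `∑_{0 ≤ 2k ≤ n} n! / (2^k k! (n-2k)!)`. -/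
theorem card_involutions_symmetric_group (n : ℕ) :
    Nat.card {s : Equiv.Perm (Fin n) // s ^ 2 = 1} =
      ∑ k ∈ Finset.range (n / 2 + 1), n ! / (2 ^ k * k ! * (n - 2 * k)!) := by
  have h : ∀ k ∈ Finset.range (n / 2 + 1), n ! / (2 ^ k * k ! * (n - 2 * k)!) = c n k := by
    intro k hk
    rw [Finset.mem_range] at hk
    exact term_eq n k (by omega)
  rw [Finset.sum_congr rfl h]
  exact I_eq_S n
end

section
/- Gauss's identity: as formal power series (or for real t with |t| < 1), ∑_{i ≥ 0} t^{i(i+1)/2} = ∏_{i ≥ 1} (1 - t^{2i}) / (1 - t^{2i-1}). -/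
open Finset Filter Real Topology

namespace GaussTri

/-- triangular number -/
def Tn (k : ℕ) : ℕ := k * (k + 1) / 2

lemma Tn_succ (k : ℕ) : Tn (k + 1) = Tn k + (k + 1) := by
  obtain ⟨a, ha⟩ := Nat.even_mul_succ_self k
  obtain ⟨b, hb⟩ := Nat.even_mul_succ_self (k + 1)
  have hr : (k + 1) * (k + 1 + 1) = k * (k + 1) + 2 * (k + 1) := by ring
  unfold Tn; omega

lemma Tn_ge (k : ℕ) : k ≤ Tn k := by
  induction k with
  | zero => simp [Tn]
  | succ n ih => rw [Tn_succ]; omega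

/-- shifted triangular exponent: `Tn (m-n)` for integer difference -/
def En (n m : ℕ) : ℕ := if n ≤ m then Tn (m - n) else Tn (n - m - 1)

lemma En_shift (n m : ℕ) : En (n + 1) (m + 1) = En n m := by
  unfold En
  rcases le_or_gt n m with h | h
  · rw [if_pos (by omega), if_pos h]; congr 1; omega
  · rw [if_neg (by omega), if_neg (by omega)]; congr 1; omega

lemma En_diag (n j : ℕ) : En n (n + j) = Tn j := by
  unfold En; rw [if_pos (by omega)]; congr 1; omega

lemma En_anti (n j : ℕ) (h : j < n) : En n (n - 1 - j) = Tn j := by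
  unfold En; rw [if_neg (by omega)]; congr 1; omega

/-- E2 -/
lemma En_rel2 (n p : ℕ) : n + En n (p + 2) = En n (p + 1) + (p + 2) := by
  unfold En
  rcases le_or_gt n (p + 1) with h | h
  · rw [if_pos (by omega), if_pos h]
    have h1 : p + 2 - n = (p + 1 - n) + 1 := by omega
    rw [h1, Tn_succ]; omega
  · rcases eq_or_lt_of_le (show p + 2 ≤ n by omega) with h2 | h2
    · rw [if_pos (by omega), if_neg (by omega)]
      have : p + 2 - n = 0 := by omega
      have : n - (p + 1) - 1 = 0 := by omega
      simp_all [Tn]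
    · rw [if_neg (by omega), if_neg (by omega)]
      have h1 : n - (p + 1) - 1 = (n - (p + 2) - 1) + 1 := by omega
      rw [h1, Tn_succ]; omega

/-- E3 -/
lemma En_rel3 (n p : ℕ) (hp : p ≤ 2 * n) :
    (n + 1) + En n p = En n (p + 1) + (2 * n - p) := by
  unfold En
  rcases le_or_gt n p with h | h
  · rw [if_pos h, if_pos (by omega)]
    have h1 : p + 1 - n = (p - n) + 1 := by omega
    rw [h1, Tn_succ]; omega
  · rcases eq_or_lt_of_le (show p + 1 ≤ n by omega) with h2 | h2
    · rw [if_neg (by omega), if_pos (by omega)]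
      have e1 : n - p - 1 = 0 := by omega
      have e2 : p + 1 - n = 0 := by omega
      rw [e1, e2]; simp [Tn]; omega
    · rw [if_neg (by omega), if_neg (by omega)]
      have h1 : n - p - 1 = (n - (p + 1) - 1) + 1 := by omega
      rw [h1, Tn_succ]; omega

/-- E4 -/
lemma En_rel4 (n : ℕ) : En (n + 1) 0 = n + En n 0 := by
  unfold En
  rcases Nat.eq_zero_or_pos n with rfl | h
  · simp [Tn]
  · rw [if_neg (by omega), if_neg (by omega)]
    have h1 : n + 1 - 0 - 1 = (n - 0 - 1) + 1 := by omega
    rw [h1, Tn_succ]; omega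

/-- E5 -/
lemma En_rel5 (n : ℕ) : En (n + 1) 1 = En n 0 := by
  unfold En
  rcases Nat.eq_zero_or_pos n with rfl | h
  · simp
  · rw [if_neg (by omega), if_neg (by omega), show n + 1 - 1 - 1 = n - 0 - 1 by omega]

/-- E6 -/
lemma En_rel6 (n : ℕ) : n + En n 1 = En (n + 1) 1 + 1 := by
  unfold En
  match n with
  | 0 => simp [Tn]
  | 1 => simp [Tn]
  | (m+2) =>
    rw [if_neg (by omega), if_neg (by omega)]
    have h1 : m + 2 - 1 - 1 = m := by omega
    have h2 : m + 2 + 1 - 1 - 1 = m + 1 := by omega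
    rw [h1, h2, Tn_succ]; omega



variable {q : ℝ}

/-- partial product of (1 - q^i), i = 1..n -/
noncomputable def Dp (q : ℝ) (n : ℕ) : ℝ := ∏ i ∈ Finset.range n, (1 - q ^ (i + 1))

lemma abs_pow_lt_one (hq : |q| < 1) (k : ℕ) : |q ^ (k + 1)| < 1 := by
  rw [abs_pow]
  calc |q| ^ (k + 1) ≤ |q| ^ 1 := by
        apply pow_le_pow_of_le_one (abs_nonneg q) hq.le; omega
    _ < 1 := by simpa using hq

lemma one_sub_pow_pos (hq : |q| < 1) (k : ℕ) : 0 < 1 - q ^ (k + 1) := by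
  have := abs_pow_lt_one hq k
  have := abs_lt.1 this
  linarith [this.2]

lemma Dp_pos (hq : |q| < 1) (n : ℕ) : 0 < Dp q n :=
  Finset.prod_pos fun i _ => one_sub_pow_pos hq i

lemma Dp_ne (hq : |q| < 1) (n : ℕ) : Dp q n ≠ 0 := (Dp_pos hq n).ne'

@[simp] lemma Dp_zero : Dp q 0 = 1 := by simp [Dp]

lemma Dp_succ (n : ℕ) : Dp q (n + 1) = Dp q n * (1 - q ^ (n + 1)) :=
  Finset.prod_range_succ _ n

/-- Gaussian binomial coefficient as ratio of Dp's. -/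
noncomputable def qb (q : ℝ) (n k : ℕ) : ℝ :=
  if k ≤ n then Dp q n / (Dp q (n - k) * Dp q k) else 0

lemma qb_of_le {n k : ℕ} (h : k ≤ n) : qb q n k = Dp q n / (Dp q (n - k) * Dp q k) :=
  if_pos h

lemma qb_of_lt {n k : ℕ} (h : n < k) : qb q n k = 0 := if_neg (by omega)

lemma qb_zero (hq : |q| < 1) (n : ℕ) : qb q n 0 = 1 := by
  rw [qb_of_le (Nat.zero_le n)]
  simp only [Nat.sub_zero, Dp_zero, mul_one]
  exact div_self (Dp_ne hq n)

lemma qb_self (hq : |q| < 1) (n : ℕ) : qb q n n = 1 := by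
  rw [qb_of_le le_rfl]
  simp [Nat.sub_self]
  exact Dp_ne hq n

lemma qb_one (hq : |q| < 1) (N : ℕ) : qb q (N + 1) 1 = (1 - q ^ (N + 1)) / (1 - q) := by
  rw [qb_of_le (by omega)]
  have h1 : N + 1 - 1 = N := by omega
  have h2 : Dp q 1 = 1 - q := by simp [Dp]
  have h3 := Dp_pos hq N
  have h4 : (0:ℝ) < 1 - q := by have := abs_lt.1 hq; linarith [this.2]
  rw [h1, Dp_succ, h2]
  rw [div_eq_div_iff (by positivity) (by positivity)]
  ring

lemma qb_pos (hq : |q| < 1) (n k : ℕ) (h : k ≤ n) : 0 < qb q n k := by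
  rw [qb_of_le h]
  have := Dp_pos hq n; have := Dp_pos hq (n - k); have := Dp_pos hq k
  positivity
  
lemma one_sub_ne (hq : |q| < 1) (k : ℕ) : (1 : ℝ) - q ^ (k + 1) ≠ 0 :=
  (one_sub_pow_pos hq k).ne'

/-- The key q-binomial identity (★). -/
lemma star (hq : |q| < 1) (N p : ℕ) (hp : p ≤ N) :
    qb q (N + 2) (p + 2) =
      (1 + q ^ (N + 1)) * qb q N (p + 1) + q ^ (p + 2) * qb q N (p + 2)
        + q ^ (N - p) * qb q N p := by
  rcases Nat.lt_or_ge p N with h | h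
  · rcases Nat.lt_or_ge (p + 1) N with h2 | h2
    · -- p + 2 ≤ N
      obtain ⟨d, rfl⟩ : ∃ d, N = p + 2 + d := ⟨N - (p + 2), by omega⟩
      rw [qb_of_le (by omega), qb_of_le (by omega), qb_of_le (by omega), qb_of_le (by omega)]
      rw [show p + 2 + d + 2 - (p + 2) = d + 2 by omega,
          show p + 2 + d - (p + 1) = d + 1 by omega,
          show p + 2 + d - (p + 2) = d by omega,
          show p + 2 + d - p = d + 2 by omega]
      rw [show p + 2 + d + 2 = (p + 2 + d + 1) + 1 by omega, Dp_succ, Dp_succ,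
          show d + 2 = (d + 1) + 1 by omega, Dp_succ, Dp_succ,
          show p + 2 = (p + 1) + 1 by omega, Dp_succ, Dp_succ]
      have n1 := Dp_ne hq (p + 1 + 1 + d)
      have n2 := Dp_ne hq d
      have n3 := Dp_ne hq p
      have n4 := one_sub_ne hq d
      have n5 := one_sub_ne hq (d + 1)
      have n6 := one_sub_ne hq p
      have n7 := one_sub_ne hq (p + 1)
      have hDD : Dp q (p + 1 + 1 + d) = Dp q (p + 2 + d) := by norm_num
      field_simp
      ring
    · -- N = p + 1
      obtain rfl : N = p + 1 := by omega
      rw [qb_of_le (show p + 2 ≤ p + 1 + 2 by omega), qb_self hq,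
          qb_of_lt (show p + 1 < p + 2 by omega), qb_of_le (show p ≤ p + 1 by omega)]
      rw [show p + 1 + 2 - (p + 2) = 1 by omega, show p + 1 - p = 1 by omega]
      rw [show p + 1 + 2 = (p + 2) + 1 by omega, Dp_succ,
          show p + 2 = (p + 1) + 1 by omega, Dp_succ, Dp_succ]
      have n3 := Dp_ne hq p
      have n6 := one_sub_ne hq p
      have n7 := one_sub_ne hq (p + 1)
      have n8 : Dp q 1 = 1 - q := by simp [Dp]
      have n9 : (1:ℝ) - q ≠ 0 := by
        have := abs_lt.1 hq; intro hcon; linarith [this.2]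
      rw [n8]
      field_simp
      ring
  · -- N = p
    have hE : N = p := by omega
    subst hE
    rw [qb_self hq, qb_of_lt (show N < N + 1 by omega),
        qb_of_lt (show N < N + 2 by omega), qb_self hq]
    simp

/-- coefficient in the finite Jacobi-type identity -/
noncomputable def cf (q : ℝ) (n m : ℕ) : ℝ := qb q (2 * n) m * q ^ (En n m)

lemma cf_eq_zero (n m : ℕ) (h : 2 * n < m) : cf q n m = 0 := by
  unfold cf; rw [qb_of_lt h, zero_mul]

lemma key0 (hq : |q| < 1) (n : ℕ) : cf q (n + 1) 0 = q ^ n * cf q n 0 := by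
  unfold cf
  rw [qb_zero hq, qb_zero hq, En_rel4, pow_add]
  ring

lemma key1 (hq : |q| < 1) (n : ℕ) :
    cf q (n + 1) 1 = q ^ n * cf q n 1 + (1 + q ^ (2 * n + 1)) * cf q n 0 := by
  match n with
  | 0 =>
    unfold cf
    rw [show 2 * 1 = 1 + 1 by rfl, qb_one hq, qb_of_lt (show 2 * 0 < 1 by omega),
        qb_zero hq]
    have hE1 : En 1 1 = 0 := by simp [En, Tn]
    have hE0 : En 0 0 = 0 := by simp [En, Tn]
    rw [hE1, hE0]
    have n9 : (1:ℝ) - q ≠ 0 := by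
      have := abs_lt.1 hq; intro hcon; linarith [this.2]
    field_simp
    ring
  | (m + 1) =>
    unfold cf
    rw [show 2 * (m + 1 + 1) = (2 * m + 3) + 1 by ring, qb_one hq,
        show 2 * (m + 1) = (2 * m + 1) + 1 by ring, qb_one hq, qb_zero hq]
    have h2 : En (m + 1) 0 = En (m + 1 + 1) 1 := (En_rel5 (m + 1)).symm
    rw [h2]
    have e6 := En_rel6 (m + 1)
    rw [show q ^ (m + 1) * ((1 - q ^ (2 * m + 1 + 1)) / (1 - q) * q ^ (En (m + 1) 1))
        = (1 - q ^ (2 * m + 1 + 1)) / (1 - q) * (q ^ (m + 1) * q ^ (En (m + 1) 1)) by ring,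
      ← pow_add, show m + 1 + En (m + 1) 1 = En (m + 1 + 1) 1 + 1 from e6, pow_add]
    have n9 : (1:ℝ) - q ≠ 0 := by
      have := abs_lt.1 hq; intro hcon; linarith [this.2]
    field_simp
    ring

lemma key2 (hq : |q| < 1) (n p : ℕ) (hp : p ≤ 2 * n) :
    cf q (n + 1) (p + 2) = q ^ n * cf q n (p + 2)
      + (1 + q ^ (2 * n + 1)) * cf q n (p + 1) + q ^ (n + 1) * cf q n p := by
  unfold cf
  have hA : En (n + 1) (p + 2) = En n (p + 1) := En_shift n (p + 1)
  have e2 := En_rel2 n p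
  have e3 := En_rel3 n p hp
  have h1 : q ^ n * q ^ (En n (p + 2)) = q ^ (p + 2) * q ^ (En n (p + 1)) := by
    rw [← pow_add, ← pow_add]; congr 1; omega
  have h2 : q ^ (n + 1) * q ^ (En n p) = q ^ (2 * n - p) * q ^ (En n (p + 1)) := by
    rw [← pow_add, ← pow_add]; congr 1; omega
  rw [show 2 * (n + 1) = 2 * n + 2 by ring, hA,
      show q ^ n * (qb q (2 * n) (p + 2) * q ^ (En n (p + 2)))
        = qb q (2 * n) (p + 2) * (q ^ n * q ^ (En n (p + 2))) by ring, h1,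
      show q ^ (n + 1) * (qb q (2 * n) p * q ^ (En n p))
        = qb q (2 * n) p * (q ^ (n + 1) * q ^ (En n p)) by ring, h2]
  linear_combination q ^ (En n (p + 1)) * star hq (2 * n) p hp

/-- The finite Gauss/Jacobi-type identity at z = 1. -/
lemma fin_id (hq : |q| < 1) (n : ℕ) :
    ∑ m ∈ Finset.range (2 * n + 1), cf q n m
      = ∏ i ∈ Finset.range n, ((1 + q ^ (i + 1)) * (1 + q ^ i)) := by
  induction n with
  | zero => simp [cf, En, Tn, qb_zero hq]
  | succ n ih =>
    have h2 : cf q n (2 * n + 1) = 0 := cf_eq_zero _ _ (by omega)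
    have h3 : cf q n (2 * n + 1 + 1) = 0 := cf_eq_zero _ _ (by omega)
    have hSm : ∑ m ∈ Finset.range (2 * n + 1), cf q n m
        = (∑ p ∈ Finset.range (2 * n + 1), cf q n (p + 1)) + cf q n 0 := by
      rw [Finset.sum_range_succ (fun p => cf q n (p + 1)) (2 * n), h2, add_zero]
      exact Finset.sum_range_succ' (fun m => cf q n m) (2 * n)
    have hS1 : ∑ p ∈ Finset.range (2 * n + 1), cf q n (p + 1)
        = (∑ p ∈ Finset.range (2 * n + 1), cf q n (p + 2)) + cf q n 1 := by
      rw [Finset.sum_range_succ (fun p => cf q n (p + 2)) (2 * n), h3, add_zero]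
      exact Finset.sum_range_succ' (fun p => cf q n (p + 1)) (2 * n)
    have hK : ∑ p ∈ Finset.range (2 * n + 1), cf q (n + 1) (p + 1 + 1)
        = q ^ n * (∑ p ∈ Finset.range (2 * n + 1), cf q n (p + 2))
          + (1 + q ^ (2 * n + 1)) * (∑ p ∈ Finset.range (2 * n + 1), cf q n (p + 1))
          + q ^ (n + 1) * (∑ p ∈ Finset.range (2 * n + 1), cf q n p) := by
      rw [Finset.mul_sum, Finset.mul_sum, Finset.mul_sum, ← Finset.sum_add_distrib,
        ← Finset.sum_add_distrib]
      refine Finset.sum_congr rfl fun p hp => ?_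
      have hp' : p ≤ 2 * n := by have := Finset.mem_range.1 hp; omega
      exact key2 hq n p hp'
    rw [show 2 * (n + 1) + 1 = (2 * n + 1 + 1) + 1 by ring]
    rw [Finset.sum_range_succ' (fun m => cf q (n + 1) m) (2 * n 
      + 1 + 1)]
    rw [Finset.sum_range_succ' (fun m => cf q (n + 1) (m + 1)) (2 * n + 1)]
    rw [hK, key1 hq n, key0 hq n]
    rw [Finset.prod_range_succ, ← ih]
    rw [hSm, hS1]
    ring

/-! ### Analytic part -/

lemma one_minus_abs_pos (hq : |q| < 1) : (0:ℝ) < 1 - |q| := by linarith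

lemma log_bound (hq : |q| < 1) {y : ℝ} (hy : |y| ≤ |q|) :
    |Real.log (1 + y)| ≤ |y| / (1 - |q|) := by
  have h1 : (0:ℝ) < 1 - |q| := by linarith
  have hy' := abs_le.1 hy
  have h0 : (0:ℝ) < 1 + y := by linarith
  have hub := Real.log_le_sub_one_of_pos h0
  have hinv := Real.log_le_sub_one_of_pos (inv_pos.2 h0)
  rw [Real.log_inv] at hinv
  have hy0 := abs_nonneg y
  have hay := le_abs_self y
  have hay2 := neg_abs_le y
  rw [abs_le]
  constructor
  · have heq : (1+y)⁻¹ - 1 = -y/(1+y) := by field_simp; ring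
    rw [heq] at hinv
    have h3 : -y/(1+y) ≤ |y|/(1-|q|) := by
      rw [div_le_div_iff₀ h0 h1]
      nlinarith [mul_nonneg (by linarith : (0:ℝ) ≤ |y| + y) h1.le,
        mul_nonneg hy0 (by linarith : (0:ℝ) ≤ (1+y)-(1-|q|))]
    linarith
  · have h4 : |y| ≤ |y| / (1-|q|) := by
      rw [le_div_iff₀ h1]; nlinarith
    linarith

lemma abs_pow_le (hq : |q| < 1) (k : ℕ) : |q| ^ (k + 1) ≤ |q| := by
  calc |q| ^ (k + 1) ≤ |q| ^ 1 := pow_le_pow_of_le_one (abs_nonneg q) hq.le (by omega)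
    _ = |q| := pow_one _

lemma summable_log_aux (hq : |q| < 1) (f : ℕ → ℝ) (hf : ∀ i, |f i| ≤ |q| ^ (i + 1)) :
    Summable (fun i => Real.log (1 + f i)) := by
  apply Summable.of_norm_bounded (g := fun i => |q| ^ (i + 1) / (1 - |q|))
  · exact (((summable_geometric_of_lt_one (abs_nonneg q) hq).mul_left |q|).div_const
      (1 - |q|)).congr (fun i => by rw [pow_succ, mul_comm (|q|^i) |q|])
  · intro i
    have h1 : |f i| ≤ |q| := le_trans (hf i) (abs_pow_le hq i)
    calc ‖Real.log (1 + f i)‖ = |Real.log (1 + f i)| := rfl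
      _ ≤ |f i| / (1 - |q|) := log_bound hq h1
      _ ≤ |q| ^ (i + 1) / (1 - |q|) :=
          div_le_div_of_nonneg_right (hf i) (one_minus_abs_pos hq).le

  
/-- bound for partial sums of log terms -/
lemma partial_log_bound (hq : |q| < 1) (f : ℕ → ℝ) (hf : ∀ i, |f i| ≤ |q| ^ (i + 1)) (n : ℕ) :
    |∑ i ∈ Finset.range n, Real.log (1 + f i)| ≤ |q| / ((1 - |q|) * (1 - |q|)) := by
  have h1 := one_minus_abs_pos hq
  calc |∑ i ∈ Finset.range n, Real.log (1 + f i)|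
      ≤ ∑ i ∈ Finset.range n, |Real.log (1 + f i)| := Finset.abs_sum_le_sum_abs _ _
    _ ≤ ∑ i ∈ Finset.range n, |q| ^ (i + 1) / (1 - |q|) := by
        apply Finset.sum_le_sum
        intro i _
        have hle : |f i| ≤ |q| := le_trans (hf i) (abs_pow_le hq i)
        exact le_trans (log_bound hq hle) (div_le_div_of_nonneg_right (hf i) h1.le)
    _ = (∑ i ∈ Finset.range n, |q| ^ i) * (|q| / (1 - |q|)) := by
        rw [Finset.sum_mul]
        apply Finset.sum_congr rfl
        intro i _
        rw [pow_succ]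
        ring
    _ ≤ (1 - |q|)⁻¹ * (|q| / (1 - |q|)) := by
        apply mul_le_mul_of_nonneg_right _ (by positivity)
        rw [← tsum_geometric_of_lt_one (abs_nonneg q) hq]
        exact Summable.sum_le_tsum _ (fun i _ => by positivity)
          (summable_geometric_of_lt_one (abs_nonneg q) hq)
    _ = |q| / ((1 - |q|) * (1 - |q|)) := by
        rw [div_mul_eq_div_div, inv_mul_eq_div]

lemma prod_eq_exp (hq : |q| < 1) (f : ℕ → ℝ) (hf : ∀ i, |f i| ≤ |q| ^ (i + 1)) (n : ℕ) :
    ∏ i ∈ Finset.range n, (1 + f i)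
      = Real.exp (∑ i ∈ Finset.range n, Real.log (1 + f i)) := by
  rw [Real.exp_sum]
  apply Finset.prod_congr rfl
  intro i _
  have h1 : |f i| ≤ |q| := le_trans (hf i) (abs_pow_le hq i)
  have := abs_le.1 h1
  rw [Real.exp_log (by linarith : (0:ℝ) < 1 + f i)]

lemma tendsto_prod_aux (hq : |q| < 1) (f : ℕ → ℝ) (hf : ∀ i, |f i| ≤ |q| ^ (i + 1)) :
    Tendsto (fun n => ∏ i ∈ Finset.range n, (1 + f i)) atTop
      (𝓝 (Real.exp (∑' i, Real.log (1 + f i)))) := by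
  have h1 := (summable_log_aux hq f hf).hasSum.tendsto_sum_nat
  have h2 := (Real.continuous_exp.tendsto _).comp h1
  exact Tendsto.congr (fun n => (prod_eq_exp hq f hf n).symm) h2

lemma prod_bounds (hq : |q| < 1) (f : ℕ → ℝ) (hf : ∀ i, |f i| ≤ |q| ^ (i + 1)) (n : ℕ) :
    Real.exp (-(|q| / ((1 - |q|) * (1 - |q|)))) ≤ ∏ i ∈ Finset.range n, (1 + f i) ∧
      ∏ i ∈ Finset.range n, (1 + f i) ≤ Real.exp (|q| / ((1 - |q|) * (1 - |q|))) := by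
  have hb := abs_le.1 (partial_log_bound hq f hf n)
  rw [prod_eq_exp hq f hf n]
  exact ⟨Real.exp_le_exp.2 hb.1, Real.exp_le_exp.2 hb.2⟩

noncomputable def Cp (q : ℝ) (n : ℕ) : ℝ := ∏ i ∈ Finset.range n, (1 + q ^ (i + 1))

lemma Cp_succ (n : ℕ) : Cp q (n + 1) = Cp q n * (1 + q ^ (n + 1)) :=
  Finset.prod_range_succ _ n

noncomputable def Bb (q : ℝ) : ℝ := |q| / ((1 - |q|) * (1 - |q|))

noncomputable def Dinf (q : ℝ) : ℝ := Real.exp (∑' i, Real.log (1 + -(q ^ (i + 1))))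

noncomputable def Cinf (q : ℝ) : ℝ := Real.exp (∑' i, Real.log (1 + q ^ (i + 1)))

lemma hfD : ∀ i, |(-(q ^ (i + 1)))| ≤ |q| ^ (i + 1) := fun i => by
  rw [abs_neg, abs_pow]

lemma hfC : ∀ i, |q ^ (i + 1)| ≤ |q| ^ (i + 1) := fun i => by rw [abs_pow]

lemma Dp_eq_f (n : ℕ) : Dp q n = ∏ i ∈ Finset.range n, (1 + -(q ^ (i + 1))) := by
  unfold Dp
  exact Finset.prod_congr rfl fun i _ => by ring

lemma tendsto_Dp (hq : |q| < 1) : Tendsto (Dp q) atTop (𝓝 (Dinf q)) :=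
  ((tendsto_prod_aux hq _ hfD).congr (fun n => (Dp_eq_f n).symm))

lemma tendsto_Cp (hq : |q| < 1) : Tendsto (Cp q) atTop (𝓝 (Cinf q)) :=
  ((tendsto_prod_aux hq _ hfC).congr (fun n => rfl))

lemma Dinf_pos : 0 < Dinf q := Real.exp_pos _
lemma Cinf_pos : 0 < Cinf q := Real.exp_pos _

lemma Dp_le_upper (hq : |q| < 1) (n : ℕ) : Dp q n ≤ Real.exp (Bb q) := by
  rw [Dp_eq_f]; exact (prod_bounds hq _ hfD n).2

lemma Dp_le_lower (hq : |q| < 1) (n : ℕ) : Real.exp (-(Bb q)) ≤ Dp q n := by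
  rw [Dp_eq_f]; exact (prod_bounds hq _ hfD n).1

lemma qb_nonneg (hq : |q| < 1) (n k : ℕ) : 0 ≤ qb q n k := by
  rcases le_or_gt k n with h | h
  · exact (qb_pos hq n k h).le
  · rw [qb_of_lt h]

noncomputable def Mb (q : ℝ) : ℝ := Real.exp (Bb q) / (Real.exp (-(Bb q)) * Real.exp (-(Bb q)))

lemma qb_le_M (hq : |q| < 1) (n k : ℕ) : qb q n k ≤ Mb q := by
  have hMpos : 0 < Real.exp (-(Bb q)) * Real.exp (-(Bb q)) := by positivity
  rcases le_or_gt k n with h | h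
  · rw [qb_of_le h]
    apply div_le_div₀ (Real.exp_pos _).le (Dp_le_upper hq n) hMpos
    exact mul_le_mul (Dp_le_lower hq _) (Dp_le_lower hq _) (Real.exp_pos _).le
      (Dp_pos hq _).le
  · rw [qb_of_lt h]; unfold Mb; positivity

lemma Mb_pos : 0 < Mb q := by unfold Mb; positivity

lemma summable_bound (hq : |q| < 1) : Summable (fun j => Mb q * |q| ^ (Tn j)) := by
  apply Summable.of_nonneg_of_le (fun j => mul_nonneg (Mb_pos (q := q)).le (by positivity))
    (fun j => mul_le_mul_of_nonneg_left
      (pow_le_pow_of_le_one (abs_nonneg q) hq.le (Tn_ge j)) (Mb_pos (q := q)).le)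
    ((summable_geometric_of_lt_one (abs_nonneg q) hq).mul_left (Mb q))

lemma tendsto_sum_A (hq : |q| < 1) :
    Tendsto (fun n => ∑ j ∈ Finset.range (n + 1), cf q n (n + j)) atTop
      (𝓝 ((∑' j : ℕ, q ^ (Tn j)) / Dinf q)) := by
  classical
  set u : ℕ → ℕ → ℝ := fun n j => if j < n + 1 then cf q n (n + j) else 0 with hu
  have key : Tendsto (fun n => ∑' j, u n j) atTop (𝓝 (∑' j : ℕ, q ^ (Tn j) / Dinf q)) := by
    apply tendsto_tsum_of_dominated_convergence (summable_bound hq)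
    · intro j
      have h2n : Tendsto (fun n : ℕ => Dp q (2 * n)) atTop (𝓝 (Dinf q)) :=
        (tendsto_Dp hq).comp (tendsto_atTop_atTop.2 fun b => ⟨b, fun a ha => by omega⟩)
      have hsub : Tendsto (fun n : ℕ => Dp q (n - j)) atTop (𝓝 (Dinf q)) :=
        (tendsto_Dp hq).comp (tendsto_atTop_atTop.2 fun b => ⟨b + j, fun a ha => by omega⟩)
      have hadd : Tendsto (fun n : ℕ => Dp q (n + j)) atTop (𝓝 (Dinf q)) :=
        (tendsto_Dp hq).comp (tendsto_atTop_atTop.2 fun b => ⟨b, fun a ha => by omega⟩)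
      have hne : Dinf q * Dinf q ≠ 0 := by
        have := Dinf_pos (q := q); positivity
      have h3 := (h2n.div (hsub.mul hadd) hne).mul_const (q ^ (Tn j))
      have hval : Dinf q / (Dinf q * Dinf q) * q ^ (Tn j) = q ^ (Tn j) / Dinf q := by
        rw [div_mul_eq_mul_div, div_eq_div_iff hne (Dinf_pos (q := q)).ne']
        ring
      rw [hval] at h3
      apply Tendsto.congr' _ h3
      filter_upwards [eventually_ge_atTop j] with n hn
      have hj : j < n + 1 := by omega
      simp only [hu, if_pos hj]
      unfold cf
      rw [qb_of_le (show n + j ≤ 2 * n by omega), show 2 * n - (n + j) = n - j by omega,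
        En_diag]
      rfl
    · apply Filter.Eventually.of_forall
      intro n j
      by_cases hj : j < n + 1
      · simp only [hu, if_pos hj]
        unfold cf
        rw [En_diag, Real.norm_eq_abs, abs_mul, abs_pow,
          abs_of_nonneg (qb_nonneg hq (2 * n) (n + j))]
        exact mul_le_mul_of_nonneg_right (qb_le_M hq _ _) (by positivity)
      · simp only [hu, if_neg hj]
        rw [norm_zero]
        exact mul_nonneg (Mb_pos (q := q)).le (by positivity)
  rw [tsum_div_const] at key
  apply key.congr
  intro n
  rw [tsum_eq_sum (s := Finset.range (n + 1)) (f := u n) (fun j hj => by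
    simp only [Finset.mem_range, not_lt] at hj
    simp only [hu]
    rw [if_neg (by omega)])]
  exact Finset.sum_congr rfl fun j hj => by
    simp only [hu, if_pos (Finset.mem_range.1 hj)]

lemma tendsto_sum_B (hq : |q| < 1) :
    Tendsto (fun n => ∑ j ∈ Finset.range n, cf q n (n - 1 - j)) atTop
      (𝓝 ((∑' j : ℕ, q ^ (Tn j)) / Dinf q)) := by
  classical
  set u : ℕ → ℕ → ℝ := fun n j => if j < n then cf q n (n - 1 - j) else 0 with hu
  have key : Tendsto (fun n => ∑' j, u n j) atTop (𝓝 (∑' j : ℕ, q ^ (Tn j) / Dinf q)) := by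
    apply tendsto_tsum_of_dominated_convergence (summable_bound hq)
    · intro j
      have h2n : Tendsto (fun n : ℕ => Dp q (2 * n)) atTop (𝓝 (Dinf q)) :=
        (tendsto_Dp hq).comp (tendsto_atTop_atTop.2 fun b => ⟨b, fun a ha => by omega⟩)
      have hsub : Tendsto (fun n : ℕ => Dp q (n - 1 - j)) atTop (𝓝 (Dinf q)) :=
        (tendsto_Dp hq).comp (tendsto_atTop_atTop.2 fun b => ⟨b + j + 1, fun a ha => by omega⟩)
      have hadd : Tendsto (fun n : ℕ => Dp q (n + 1 + j)) atTop (𝓝 (Dinf q)) :=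
        (tendsto_Dp hq).comp (tendsto_atTop_atTop.2 fun b => ⟨b, fun a ha => by omega⟩)
      have hne : Dinf q * Dinf q ≠ 0 := by
        have := Dinf_pos (q := q); positivity
      have h3 := (h2n.div (hadd.mul hsub) hne).mul_const (q ^ (Tn j))
      have hval : Dinf q / (Dinf q * Dinf q) * q ^ (Tn j) = q ^ (Tn j) / Dinf q := by
        rw [div_mul_eq_mul_div, div_eq_div_iff hne (Dinf_pos (q := q)).ne']
        ring
      rw [hval] at h3
      apply Tendsto.congr' _ h3
      filter_upwards [eventually_ge_atTop (j + 1)] with n hn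
      have hj : j < n := by omega
      simp only [hu, if_pos hj]
      unfold cf
      rw [qb_of_le (show n - 1 - j ≤ 2 * n by omega),
        show 2 * n - (n - 1 - j) = n + 1 + j by omega, En_anti n j hj]
      rfl
    · apply Filter.Eventually.of_forall
      intro n j
      by_cases hj : j < n
      · simp only [hu, if_pos hj]
        unfold cf
        rw [En_anti n j hj, Real.norm_eq_abs, abs_mul, abs_pow,
          abs_of_nonneg (qb_nonneg hq (2 * n) (n - 1 - j))]
        exact mul_le_mul_of_nonneg_right (qb_le_M hq _ _) (by positivity)
      · simp only [hu, if_neg hj]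
        rw [norm_zero]
        exact mul_nonneg (Mb_pos (q := q)).le (by positivity)
  rw [tsum_div_const] at key
  apply key.congr
  intro n
  rw [tsum_eq_sum (s := Finset.range n) (f := u n) (fun j hj => by
    simp only [Finset.mem_range, not_lt] at hj
    simp only [hu]
    rw [if_neg (by omega)])]
  exact Finset.sum_congr rfl fun j hj => by
    simp only [hu, if_pos (Finset.mem_range.1 hj)]

/-- split of the central sum -/
lemma sum_split (n : ℕ) : ∑ m ∈ Finset.range (2 * n + 1), cf q n m
    = (∑ j ∈ Finset.range (n + 1), cf q n (n + j))
      + ∑ j ∈ Finset.range n, cf q n (n - 1 - j) := by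
  have h1 : ∑ j ∈ Finset.range n, cf q n (n - 1 - j) = ∑ j ∈ Finset.range n, cf q n j :=
    Finset.sum_range_reflect (fun j => cf q n j) n
  rw [h1]
  have h2 : ∑ m ∈ Finset.range (2 * n + 1), cf q n m
      = ∑ m ∈ Finset.Ico 0 n, cf q n m + ∑ m ∈ Finset.Ico n (2 * n + 1), cf q n m := by
    rw [Finset.sum_Ico_consecutive _ (by omega) (by omega), ← Finset.range_eq_Ico]
  rw [h2, ← Finset.range_eq_Ico, Finset.sum_Ico_eq_sum_range]
  rw [show 2 * n + 1 - n = n + 1 by omega]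
  ring

lemma two_Cp (n : ℕ) : (∏ i ∈ Finset.range n, (1 + q ^ i)) * (1 + q ^ n) = 2 * Cp q n := by
  induction n with
  | zero => norm_num [Cp]
  | succ n ih =>
    rw [Finset.prod_range_succ, ih, Cp_succ]
    ring

lemma fin2 (hq : |q| < 1) (n : ℕ) :
    (∑ m ∈ Finset.range (2 * n + 1), cf q n m) * (1 + q ^ n) = 2 * Cp q n ^ 2 := by
  rw [fin_id hq n, Finset.prod_mul_distrib]
  calc ((∏ i ∈ Finset.range n, (1 + q ^ (i + 1))) * ∏ i ∈ Finset.range n, (1 + q ^ i))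
        * (1 + q ^ n)
      = Cp q n * ((∏ i ∈ Finset.range n, (1 + q ^ i)) * (1 + q ^ n)) := by
        unfold Cp; ring
    _ = Cp q n * (2 * Cp q n) := by rw [two_Cp]
    _ = 2 * Cp q n ^ 2 := by ring

lemma S_eq (hq : |q| < 1) : (∑' j : ℕ, q ^ (Tn j)) = Cinf q ^ 2 * Dinf q := by
  have hA := tendsto_sum_A hq
  have hB := tendsto_sum_B hq
  have hSig : Tendsto (fun n => ∑ m ∈ Finset.range (2 * n + 1), cf q n m) atTop
      (𝓝 ((∑' j : ℕ, q ^ (Tn j)) / Dinf q + (∑' j : ℕ, q ^ (Tn j)) / Dinf q)) :=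
    (hA.add hB).congr (fun n => (sum_split n).symm)
  have hqn : Tendsto (fun n : ℕ => 1 + q ^ n) atTop (𝓝 (1 + 0)) :=
    tendsto_const_nhds.add (tendsto_pow_atTop_nhds_zero_of_abs_lt_one hq)
  have h1 := hSig.mul hqn
  have h2 : Tendsto (fun n => (∑ m ∈ Finset.range (2 * n + 1), cf q n m) * (1 + q ^ n))
      atTop (𝓝 (2 * Cinf q ^ 2)) :=
    (((tendsto_Cp hq).pow 2).const_mul 2).congr (fun n => (fin2 hq n).symm)
  have h3 := tendsto_nhds_unique h1 h2
  have hD := Dinf_pos (q := q)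
  have hD' : Dinf q ≠ 0 := hD.ne'
  field_simp at h3
  linarith

lemma prod_ratio (hq : |q| < 1) (n : ℕ) :
    ∏ i ∈ Finset.range n, ((1 - q ^ (2 * i + 2)) / (1 - q ^ (2 * i + 1)))
      = (Dp q n * Cp q n) ^ 2 / Dp q (2 * n) := by
  induction n with
  | zero => simp [Cp]
  | succ n ih =>
    rw [Finset.prod_range_succ, ih, show 2 * (n + 1) = 2 * n + 1 + 1 by ring]
    simp only [Dp_succ, Cp_succ]
    have n1 := Dp_ne hq (2 * n)
    have n2 := one_sub_ne hq (2 * n)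
    have n3 := one_sub_ne hq (2 * n + 1)
    field_simp
    ring

lemma summable_log_one_sub (hq : |q| < 1) (a : ℕ → ℕ) (ha : ∀ i, i + 1 ≤ a i) :
    Summable (fun i => Real.log (1 - q ^ (a i))) := by
  apply Summable.of_norm_bounded (g := fun i => |q| ^ (i + 1) / (1 - |q|))
  · exact (((summable_geometric_of_lt_one (abs_nonneg q) hq).mul_left |q|).div_const
      (1 - |q|)).congr (fun i => by rw [pow_succ, mul_comm (|q| ^ i) |q|])
  · intro i
    obtain ⟨k, hk⟩ : ∃ k, a i = k + 1 := ⟨a i - 1, by have := ha i; omega⟩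
    have h3 := ha i
    rw [hk] at h3 ⊢
    have h1 : |(-(q ^ (k + 1)))| ≤ |q| := by
      rw [abs_neg, abs_pow]; exact abs_pow_le hq k
    have h2 := log_bound hq h1
    rw [sub_eq_add_neg, Real.norm_eq_abs]
    calc |Real.log (1 + -q ^ (k + 1))| ≤ |(-(q ^ (k + 1)))| / (1 - |q|) := by
          rw [show (1:ℝ) + -q ^ (k+1) = 1 + -(q ^ (k+1)) by ring]; exact h2
      _ = |q| ^ (k + 1) / (1 - |q|) := by rw [abs_neg, abs_pow]
      _ ≤ |q| ^ (i + 1) / (1 - |q|) := by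
          apply div_le_div_of_nonneg_right _ (one_minus_abs_pos hq).le
          exact pow_le_pow_of_le_one (abs_nonneg q) hq.le (by omega)

lemma tprod_eq_CD (hq : |q| < 1) :
    ∏' i : ℕ, (1 - q ^ (2 * i + 2)) / (1 - q ^ (2 * i + 1)) = Cinf q ^ 2 * Dinf q := by
  have hgpos : ∀ i : ℕ, 0 < (1 - q ^ (2 * i + 2)) / (1 - q ^ (2 * i + 1)) := fun i => by
    have h1 := one_sub_pow_pos hq (2 * i + 1)
    have h2 := one_sub_pow_pos hq (2 * i)
    rw [show 2 * i + 1 + 1 = 2 * i + 2 by ring] at h1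
    exact div_pos h1 h2
  have hne1 : ∀ i : ℕ, (1:ℝ) - q ^ (2 * i + 2) ≠ 0 := fun i => by
    have := one_sub_pow_pos hq (2 * i + 1)
    rw [show 2 * i + 1 + 1 = 2 * i + 2 by ring] at this
    exact this.ne'
  have hne2 : ∀ i : ℕ, (1:ℝ) - q ^ (2 * i + 1) ≠ 0 := fun i => (one_sub_pow_pos hq (2 * i)).ne'
  have hs1 : Summable (fun i : ℕ => Real.log (1 - q ^ (2 * i + 2))) :=
    summable_log_one_sub hq _ (fun i => by omega)
  have hs2 : Summable (fun i : ℕ => Real.log (1 - q ^ (2 * i + 1))) :=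
    summable_log_one_sub hq _ (fun i => by omega)
  have hsum : Summable
      (fun i : ℕ => Real.log ((1 - q ^ (2 * i + 2)) / (1 - q ^ (2 * i + 1)))) :=
    (hs1.sub hs2).congr (fun i => (Real.log_div (hne1 i) (hne2 i)).symm)
  have hHP : HasProd (fun i : ℕ => (1 - q ^ (2 * i + 2)) / (1 - q ^ (2 * i + 1)))
      (Real.exp (∑' i : ℕ, Real.log ((1 - q ^ (2 * i + 2)) / (1 - q ^ (2 * i + 1))))) := by
    have h := hsum.hasSum.rexp
    rwa [show (Real.exp ∘ fun i : ℕ =>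
        Real.log ((1 - q ^ (2 * i + 2)) / (1 - q ^ (2 * i + 1))))
      = (fun i : ℕ => (1 - q ^ (2 * i + 2)) / (1 - q ^ (2 * i + 1)))
      from funext fun i => Real.exp_log (hgpos i)] at h
  have hlim1 := hHP.tendsto_prod_nat
  have h2n : Tendsto (fun n : ℕ => Dp q (2 * n)) atTop (𝓝 (Dinf q)) :=
    (tendsto_Dp hq).comp (tendsto_atTop_atTop.2 fun b => ⟨b, fun a ha => by omega⟩)
  have hlim2 : Tendsto
      (fun n => ∏ i ∈ Finset.range n, ((1 - q ^ (2 * i + 2)) / (1 - q ^ (2 * i + 1))))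
      atTop (𝓝 ((Dinf q * Cinf q) ^ 2 / Dinf q)) := by
    apply Tendsto.congr (fun n => (prod_ratio hq n).symm)
    exact (((tendsto_Dp hq).mul (tendsto_Cp hq)).pow 2).div h2n (Dinf_pos (q := q)).ne'
  have heq := tendsto_nhds_unique hlim1 hlim2
  rw [hHP.tprod_eq, heq]
  have hD' : Dinf q ≠ 0 := (Dinf_pos (q := q)).ne'
  field_simp

end GaussTri

/-- Gauss's identity: for real `t` with `|t| < 1`,
`∑_{i ≥ 0} t^{i(i+1)/2} = ∏_{i ≥ 1} (1 - t^{2i})/(1 - t^{2i-1})`. -/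
theorem gauss_triangular_identity (t : ℝ) (ht : |t| < 1) :
    ∑' i : ℕ, t ^ (i * (i + 1) / 2) =
      ∏' i : ℕ, (1 - t ^ (2 * i + 2)) / (1 - t ^ (2 * i + 1)) := by
  have h1 : (∑' i : ℕ, t ^ (i * (i + 1) / 2)) = ∑' i : ℕ, t ^ (GaussTri.Tn i) := rfl
  rw [h1, GaussTri.S_eq ht, GaussTri.tprod_eq_CD ht]
end
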